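/- If (X̄, ȳ, S̄) is an ε-precise solution of the infeasible-non-interior refining problem, meaning λ_min(X̄ + ηX) ≥ -ε, λ_min(ηS - Σᵢ ȳᵢAᵢ) ≥ -ε, |η b̄ᵢ - Aᵢ • X̄| ≤ ε for all i (where b̄ᵢ = bᵢ - Aᵢ • X), and (X̄ + ηX) • (ηS - Σᵢ ȳᵢAᵢ) ≤ ε, then with η > 1 the point (X + (1/η)X̄, y + (1/η)ȳ) is an (ε/η)-precise solution of the original SDO: λ_min(X + (1/η)X̄) ≥ -ε/η, λ_min(C - Σᵢ(yᵢ + (1/η)ȳᵢ)Aᵢ) ≥ -ε/η, |bᵢ - Aᵢ • (X + (1/η)X̄)| ≤ ε/η for all i, and the complementarity product is at most ε/η. -/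

import Mathlib

open Matrix Finset

/-- `eigMinGE M c` states that every eigenvalue of the symmetric matrix `M` is at least
`c`, expressed as `M - c • I ⪰ 0`. -/
def eigMinGE {n : ℕ} (M : Matrix (Fin n) (Fin n) ℝ) (c : ℝ) : Prop :=
  (M - c • (1 : Matrix (Fin n) (Fin n) ℝ)).PosSemidef

lemma psd_smul {n : ℕ} {M : Matrix (Fin n) (Fin n) ℝ} (h : M.PosSemidef) {c : ℝ}
    (hc : 0 ≤ c) : (c • M).PosSemidef := by
  constructor
  · have := h.1
    unfold Matrix.IsHermitian at this ⊢
    rw [conjTranspose_smul, this]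
    simp
  · intro x
    have := h.2 x
    simpa [smul_mulVec, dotProduct_smul, Finsupp.sum, Finset.mul_sum, mul_assoc, mul_left_comm] using mul_nonneg hc this

open scoped MatrixOrder in
lemma psd_trace_mul_nonneg {n : ℕ} {M N : Matrix (Fin n) (Fin n) ℝ}
    (hM : M.PosSemidef) (hN : N.PosSemidef) : 0 ≤ (M * N).trace := by
  have h1 : M * N = CFC.sqrt M * (CFC.sqrt M * N) := by
    rw [← mul_assoc, CFC.sqrt_mul_sqrt_self M hM.nonneg]
  rw [h1, Matrix.trace_mul_comm]
  have h2 : CFC.sqrt M * N * CFC.sqrt M = (CFC.sqrt M)ᴴ * N * CFC.sqrt M := by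
    rw [(CFC.sqrt_nonneg M).posSemidef.1]
  have hpsd : ((CFC.sqrt M)ᴴ * N * CFC.sqrt M).PosSemidef := hN.conjTranspose_mul_mul_same _
  rw [h2]
  rw [Matrix.trace]
  refine Finset.sum_nonneg fun i _ => ?_
  have := hpsd.dotProduct_mulVec_nonneg (Pi.single i 1)
  simpa [dotProduct, Matrix.mulVec, Pi.single_apply, Matrix.diag] using this

lemma eigMinGE_scale {n : ℕ} {M : Matrix (Fin n) (Fin n) ℝ} {ε η : ℝ} (hη : 0 < η)
    (h : eigMinGE M (-ε)) : eigMinGE (η⁻¹ • M) (-(ε / η)) := by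
  unfold eigMinGE at h ⊢
  have : η⁻¹ • M - (-(ε / η)) • (1 : Matrix (Fin n) (Fin n) ℝ)
      = η⁻¹ • (M - (-ε) • (1 : Matrix (Fin n) (Fin n) ℝ)) := by
    rw [smul_sub, smul_smul]
    congr 2
    field_simp
  rw [this]
  exact psd_smul h (by positivity)

/-- If `(X̄, ȳ, S̄)` is an ε-precise solution of the
infeasible-non-interior refining problem, then with `η > 1` the point
`(X + (1/η)X̄, y + (1/η)ȳ)` is an `(ε/η)`-precise solution of the original SDO. -/
theorem infeasible_non_interior_IR_step {n m : ℕ}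
    (A : Fin m → Matrix (Fin n) (Fin n) ℝ) (C : Matrix (Fin n) (Fin n) ℝ)
    (b : Fin m → ℝ) (ε η : ℝ) (hη : 1 < η)
    (X S Xbar : Matrix (Fin n) (Fin n) ℝ) (y ybar : Fin m → ℝ) (bbar : Fin m → ℝ)
    (hS : S = C - ∑ i, y i • A i)
    (hbbar : ∀ i, bbar i = b i - (A i * X).trace)
    -- ε-precise solution of the refining problem
    (hXlb : eigMinGE (Xbar + η • X) (-ε))
    (hSlb : eigMinGE (η • S - ∑ i, ybar i • A i) (-ε))
    (hfeas : ∀ i, |η * bbar i - (A i * Xbar).trace| ≤ ε)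
    (hgap : ((Xbar + η • X) * (η • S - ∑ i, ybar i • A i)).trace ≤ ε) :
    -- the updated point is an (ε/η)-precise solution of the original SDO
    eigMinGE (X + η⁻¹ • Xbar) (-(ε / η)) ∧
    eigMinGE (C - ∑ i, (y i + η⁻¹ * ybar i) • A i) (-(ε / η)) ∧
    (∀ i, |b i - (A i * (X + η⁻¹ • Xbar)).trace| ≤ ε / η) ∧
    ((X + η⁻¹ • Xbar) * (C - ∑ i, (y i + η⁻¹ * ybar i) • A i)).trace ≤ ε / η := by
  have hη0 : 0 < η := lt_trans one_pos hη
  -- ε is nonnegative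
  have hε : 0 ≤ ε := by
    by_contra hneg
    push_neg at hneg
    set M := Xbar + η • X
    set N := η • S - ∑ i, ybar i • A i
    have hM : M.PosSemidef := by
      have h1 : M = (M - (-ε) • (1 : Matrix (Fin n) (Fin n) ℝ)) + (-ε) • 1 := by abel
      rw [h1]
      exact hXlb.add (psd_smul Matrix.PosSemidef.one (by linarith))
    have hN : N.PosSemidef := by
      have h1 : N = (N - (-ε) • (1 : Matrix (Fin n) (Fin n) ℝ)) + (-ε) • 1 := by abel
      rw [h1]
      exact hSlb.add (psd_smul Matrix.PosSemidef.one (by linarith))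
    have := psd_trace_mul_nonneg hM hN
    linarith
  -- key equalities
  have e1 : X + η⁻¹ • Xbar = η⁻¹ • (Xbar + η • X) := by
    rw [smul_add, smul_smul, inv_mul_cancel₀ hη0.ne', one_smul, add_comm]
  have e2 : C - ∑ i, (y i + η⁻¹ * ybar i) • A i
      = η⁻¹ • (η • S - ∑ i, ybar i • A i) := by
    subst hS
    rw [smul_sub, smul_smul, inv_mul_cancel₀ hη0.ne', one_smul, Finset.smul_sum]
    simp only [add_smul, Finset.sum_add_distrib, smul_smul]
    abel
  refine ⟨?_, ?_, ?_, ?_⟩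
  · rw [e1]; exact eigMinGE_scale hη0 hXlb
  · rw [e2]; exact eigMinGE_scale hη0 hSlb
  · intro i
    have key : b i - (A i * (X + η⁻¹ • Xbar)).trace
        = η⁻¹ * (η * bbar i - (A i * Xbar).trace) := by
      rw [hbbar i, mul_add, _root_.Matrix.mul_smul, Matrix.trace_add, Matrix.trace_smul,
        smul_eq_mul]
      field_simp
      ring
    rw [key, abs_mul, abs_of_nonneg (by positivity : (0:ℝ) ≤ η⁻¹)]
    calc η⁻¹ * |η * bbar i - (A i * Xbar).trace| ≤ η⁻¹ * ε :=
          mul_le_mul_of_nonneg_left (hfeas i) (by positivity)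
      _ = ε / η := by rw [div_eq_inv_mul]
  · rw [e1, e2, Matrix.smul_mul, _root_.Matrix.mul_smul, Matrix.trace_smul,
      Matrix.trace_smul, smul_eq_mul, smul_eq_mul, div_eq_inv_mul]
    set T := ((Xbar + η • X) * (η • S - ∑ i, ybar i • A i)).trace with hT
    have hi : (0:ℝ) < η⁻¹ := inv_pos.mpr hη0
    have hinv1 : η⁻¹ ≤ 1 := by
      rw [inv_le_one_iff₀]; right; linarith
    calc η⁻¹ * (η⁻¹ * T) ≤ η⁻¹ * (η⁻¹ * ε) := by
          have := mul_le_mul_of_nonneg_left hgap hi.le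
          exact mul_le_mul_of_nonneg_left this hi.le
      _ ≤ 1 * (η⁻¹ * ε) := by
          have : (0:ℝ) ≤ η⁻¹ * ε := mul_nonneg hi.le hε
          exact mul_le_mul_of_nonneg_right hinv1 this
      _ = η⁻¹ * ε := one_mul _
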